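/- Let α ∈ ℝ, let σ ∈ ℝ with σ ≠ 0 and σ ≠ 1, let β ∈ (0,1), let K > 0 and C ∈ ℝ, and let q > 0 satisfy 1 + ασq > 0. Then the function u defined by u(q) = (Kσ/(σ−1))·(1+ασq)^{β−1/σ}·q^{1−β}·[1 + (β−1/σ)·∫₀¹ (1−t)^{−β}·(1+tασq)^{1/σ−1} dt] + C is differentiable at q with derivative u′(q) = K·(1+ασq)^{β−1/σ}·q^{−β}. -/

import Mathlib

open Real MeasureTheory intervalIntegral Set

lemma pos_aux {a : ℝ} (ha : 0 < 1 + a) {t : ℝ} (ht : t ∈ Set.Icc (0:ℝ) 1) :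
    0 < 1 + t * a := by
  rcases le_or_gt 0 a with h | h
  · nlinarith [ht.1, ht.2]
  · nlinarith [ht.1, ht.2]

lemma int_base {β : ℝ} (hβ1 : β < 1) :
    IntervalIntegrable (fun t : ℝ => (1 - t) ^ (-β)) volume 0 1 := by
  have h := (intervalIntegral.intervalIntegrable_rpow' (a := 0) (b := 1) (r := -β)
      (by linarith)).comp_sub_left 1
  simpa using h.symm

lemma int_aux {β a : ℝ} (hβ1 : β < 1) (ha : 0 < 1 + a) (e : ℝ) :
    IntervalIntegrable (fun t : ℝ => (1 - t) ^ (-β) * (1 + t * a) ^ e) volume 0 1 := by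
  refine (int_base hβ1).mul_continuousOn ?_
  refine ContinuousOn.rpow_const ?_ ?_
  · fun_prop
  · intro t ht
    rw [Set.uIcc_of_le (by norm_num : (0:ℝ) ≤ 1)] at ht
    exact Or.inl (pos_aux ha ht).ne'

lemma rpow_split {s β : ℝ} (hs : 0 ≤ s) (hβ0 : 0 < β) (hβ1 : β < 1) :
    s ^ (1 - β) = s * s ^ (-β) := by
  rcases eq_or_lt_of_le hs with h | h
  · rw [← h, Real.zero_rpow (by linarith), Real.zero_rpow (by linarith), mul_zero]
  · rw [show (1:ℝ) - β = 1 + (-β) by ring, Real.rpow_add h, Real.rpow_one]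

lemma rpow_split' {A : ℝ} (hA : 0 < A) (e : ℝ) : A ^ e = A * A ^ (e - 1) := by
  rw [show e = 1 + (e - 1) by ring, Real.rpow_add hA, Real.rpow_one]
  ring_nf

lemma ftc_identity {β a : ℝ} (hβ0 : 0 < β) (hβ1 : β < 1) (ha : 0 < 1 + a) (c : ℝ) :
    (1 - β + c) * (∫ t in (0:ℝ)..1, (1 - t) ^ (-β) * (1 + t * a) ^ c)
      - c * (1 + a) * (∫ t in (0:ℝ)..1, (1 - t) ^ (-β) * (1 + t * a) ^ (c - 1)) = 1 := by
  set f : ℝ → ℝ := fun t => (1 - t) ^ (1 - β) * (1 + t * a) ^ c with hf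
  set g : ℝ → ℝ := fun t =>
    (-(1 - β + c)) * ((1 - t) ^ (-β) * (1 + t * a) ^ c)
      + (c * (1 + a)) * ((1 - t) ^ (-β) * (1 + t * a) ^ (c - 1)) with hg
  have hcont : ContinuousOn f (Icc 0 1) := by
    refine ContinuousOn.mul ?_ ?_
    · exact ((Real.continuous_rpow_const (by linarith)).comp
        (continuous_const.sub continuous_id)).continuousOn
    · exact ContinuousOn.rpow_const (by fun_prop)
        (fun t ht => Or.inl (pos_aux ha ht).ne')
  have hderiv : ∀ t ∈ Ioo (0:ℝ) 1, HasDerivWithinAt f (g t) (Ioi t) t := by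
    intro t ht
    have hApos : 0 < 1 + t * a := pos_aux ha ⟨ht.1.le, ht.2.le⟩
    have h1 : HasDerivAt (fun t : ℝ => (1 - t) ^ (1 - β))
        ((-1) * (1 - β) * (1 - t) ^ (1 - β - 1)) t := by
      exact ((hasDerivAt_id t).const_sub 1).rpow_const (Or.inl (by linarith [ht.2] : (1:ℝ) - t ≠ 0))
    have h2 : HasDerivAt (fun t : ℝ => (1 + t * a) ^ c)
        ((1 * a) * c * (1 + t * a) ^ (c - 1)) t := by
      exact (((hasDerivAt_id t).mul_const a).const_add 1).rpow_const (Or.inl hApos.ne')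
    have hmul := h1.mul h2
    have : HasDerivAt f (g t) t := by
      refine hmul.congr_deriv ?_
      symm
      simp only [hg]
      rw [show ((1:ℝ) - t) ^ (1 - β) = (1 - t) * (1 - t) ^ (-β) from
          rpow_split (by linarith [ht.2]) hβ0 hβ1,
        show ((1:ℝ) + t * a) ^ c = (1 + t * a) * (1 + t * a) ^ (c - 1) from rpow_split' hApos c,
        show (1:ℝ) - β - 1 = -β by ring]
      ring
    exact this.hasDerivWithinAt
  have f'int : IntervalIntegrable g volume 0 1 :=
    ((int_aux hβ1 ha c).const_mul _).add ((int_aux hβ1 ha (c - 1)).const_mul _)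
  have key := integral_eq_sub_of_hasDeriv_right_of_le (by norm_num) hcont hderiv f'int
  have hf1 : f 1 = 0 := by
    simp [hf, Real.zero_rpow (by intro h; linarith : (1:ℝ) - β ≠ 0)]
  have hf0 : f 0 = 1 := by simp [hf]
  rw [hf1, hf0] at key
  rw [intervalIntegral.integral_add ((int_aux hβ1 ha c).const_mul _)
      ((int_aux hβ1 ha (c - 1)).const_mul _),
    intervalIntegral.integral_const_mul, intervalIntegral.integral_const_mul] at key
  linarith

lemma bound_aux {w : ℝ} (hw : 0 < 1 + w) {t : ℝ} (ht : t ∈ Icc (0:ℝ) 1) :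
    min 1 (1 + w) ≤ 1 + t * w := by
  rcases le_or_gt 0 w with h | h
  · have := min_le_left (1:ℝ) (1+w); nlinarith [ht.1, ht.2]
  · have := min_le_right (1:ℝ) (1+w); nlinarith [ht.1, ht.2]

lemma param_deriv {β m q : ℝ} (hβ0 : 0 < β) (hβ1 : β < 1) (hq : 0 < q)
    (hpos : 0 < 1 + m * q) (c : ℝ) :
    HasDerivAt (fun x : ℝ => ∫ t in (0:ℝ)..1, (1 - t) ^ (-β) * (1 + t * (m * x)) ^ c)
      (q⁻¹ * (c * ((∫ t in (0:ℝ)..1, (1 - t) ^ (-β) * (1 + t * (m * q)) ^ c)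
        - ∫ t in (0:ℝ)..1, (1 - t) ^ (-β) * (1 + t * (m * q)) ^ (c - 1)))) q := by
  set ε : ℝ := min (q/2) ((1 + m*q)/(2*(|m|+1))) with hε
  have hm1 : (0:ℝ) < |m| + 1 := by positivity
  have εpos : 0 < ε := by
    apply lt_min (by linarith) (by positivity)
  set δ : ℝ := min 1 ((1 + m*q)/2) with hδ
  have δpos : 0 < δ := lt_min one_pos (by linarith)
  set M : ℝ := 1 + |m| * (2*q) with hM
  have hMpos : 0 < M := by positivity
  set B : ℝ := |m| * |c| * max (δ ^ (c-1)) (M ^ (c-1)) with hB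
  -- key pointwise bounds on the ball
  have hball : ∀ x ∈ Metric.ball q ε, ∀ t ∈ Icc (0:ℝ) 1,
      δ ≤ 1 + t * (m * x) ∧ 1 + t * (m * x) ≤ M := by
    intro x hx t ht
    rw [Metric.mem_ball, Real.dist_eq] at hx
    have hxq : |x - q| < ε := hx
    have h1 : |m * x - m * q| ≤ |m| * ε := by
      rw [← mul_sub, abs_mul]
      exact mul_le_mul_of_nonneg_left hxq.le (abs_nonneg m)
    have h2 : |m| * ε ≤ (1 + m*q)/2 := by
      have : ε ≤ (1 + m*q)/(2*(|m|+1)) := min_le_right _ _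
      have h3 : |m| * ε ≤ |m| * ((1 + m*q)/(2*(|m|+1))) :=
        mul_le_mul_of_nonneg_left this (abs_nonneg m)
      have h4 : |m| * ((1 + m*q)/(2*(|m|+1))) ≤ (1 + m*q)/2 := by
        rw [← mul_div_assoc, div_le_div_iff₀ (by positivity) (by norm_num : (0:ℝ) < 2)]
        nlinarith [abs_nonneg m, hpos]
      linarith
    have hmx : (1 + m*q)/2 ≤ 1 + m * x := by
      have := abs_le.1 (h1.trans h2)
      linarith [this.1]
    have hwpos : 0 < 1 + m * x := by linarith
    constructor
    · have := bound_aux hwpos ht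
      have hδle : δ ≤ min 1 (1 + m * x) := le_min (min_le_left _ _)
        (le_trans (min_le_right _ _) hmx)
      linarith
    · have hxabs : |x| ≤ 2 * q := by
        have : |x| ≤ |x - q| + |q| := by
          calc |x| = |(x - q) + q| := by ring_nf
          _ ≤ |x - q| + |q| := abs_add_le _ _
        have hq' : |q| = q := abs_of_pos hq
        have hεq : ε ≤ q/2 := min_le_left _ _
        linarith
      have : t * (m * x) ≤ |m| * (2*q) := by
        calc t * (m * x) ≤ |t * (m * x)| := le_abs_self _
        _ = |t| * (|m| * |x|) := by rw [abs_mul, abs_mul]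
        _ ≤ 1 * (|m| * (2*q)) := by
            apply mul_le_mul (by rw [abs_of_nonneg ht.1]; exact ht.2)
              (mul_le_mul_of_nonneg_left hxabs (abs_nonneg m))
              (by positivity) (by norm_num)
        _ = |m| * (2*q) := by ring
      linarith
  have key := intervalIntegral.hasDerivAt_integral_of_dominated_loc_of_deriv_le
    (F := fun x t => (1 - t) ^ (-β) * (1 + t * (m * x)) ^ c)
    (F' := fun x t => (1 - t) ^ (-β) * (t * (m*1) * c * (1 + t * (m * x)) ^ (c - 1)))
    (x₀ := q) (a := 0) (b := 1) (bound := fun t => (1 - t) ^ (-β) * B) (μ := volume)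
    (Metric.ball_mem_nhds q εpos)
    (Filter.Eventually.of_forall fun x => by
      apply Measurable.aestronglyMeasurable; fun_prop)
    (int_aux hβ1 hpos c)
    (by apply Measurable.aestronglyMeasurable; fun_prop)
    (Filter.Eventually.of_forall fun t => by
      intro ht x hx
      rw [Set.uIoc_of_le (zero_le_one)] at ht
      have ht' : t ∈ Icc (0:ℝ) 1 := ⟨ht.1.le, ht.2⟩
      obtain ⟨hlo, hhi⟩ := hball x hx t ht'
      have hApos : 0 < 1 + t * (m * x) := lt_of_lt_of_le δpos hlo
      have h1t : (0:ℝ) ≤ 1 - t := by linarith [ht'.2]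
      have habs1 : ‖(1 - t) ^ (-β) * (t * (m*1) * c * (1 + t * (m * x)) ^ (c - 1))‖
          = (1 - t) ^ (-β) * (|t| * |m| * |c| * (1 + t * (m * x)) ^ (c - 1)) := by
        rw [Real.norm_eq_abs, abs_mul, abs_of_nonneg (Real.rpow_nonneg h1t _), mul_one,
          abs_mul, abs_mul, abs_of_nonneg (Real.rpow_nonneg hApos.le _), abs_mul t m]
      rw [habs1]
      apply mul_le_mul_of_nonneg_left _ (Real.rpow_nonneg h1t _)
      have hmax : (1 + t * (m * x)) ^ (c - 1) ≤ max (δ ^ (c-1)) (M ^ (c-1)) := by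
        rcases le_or_gt 0 (c - 1) with hc | hc
        · exact le_trans (Real.rpow_le_rpow hApos.le hhi hc) (le_max_right _ _)
        · exact le_trans (Real.rpow_le_rpow_of_nonpos δpos hlo hc.le) (le_max_left _ _)
      have htabs : |t| ≤ 1 := by rw [abs_of_nonneg ht'.1]; exact ht'.2
      have h0 : (0:ℝ) ≤ (1 + t * (m * x)) ^ (c - 1) := Real.rpow_nonneg hApos.le _
      calc |t| * |m| * |c| * (1 + t * (m * x)) ^ (c - 1)
          ≤ 1 * |m| * |c| * max (δ ^ (c-1)) (M ^ (c-1)) := by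
            apply mul_le_mul (mul_le_mul_of_nonneg_right
              (mul_le_mul_of_nonneg_right htabs (abs_nonneg m)) (abs_nonneg c)) hmax h0
            positivity
        _ = B := by rw [hB]; ring)
    ((int_base hβ1).mul_const B)
    (Filter.Eventually.of_forall fun t => by
      intro ht x hx
      rw [Set.uIoc_of_le (zero_le_one)] at ht
      have ht' : t ∈ Icc (0:ℝ) 1 := ⟨ht.1.le, ht.2⟩
      obtain ⟨hlo, _⟩ := hball x hx t ht'
      have hApos : 0 < 1 + t * (m * x) := lt_of_lt_of_le δpos hlo
      exact ((((hasDerivAt_id x).const_mul m).const_mul t).const_add 1).rpow_const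
        (Or.inl hApos.ne') |>.const_mul _)
  have hD := key.2
  have h1 : Set.EqOn
      (fun t : ℝ => q * ((1 - t) ^ (-β) * (t * (m*1) * c * (1 + t * (m * q)) ^ (c - 1))))
      (fun t : ℝ => c * ((1 - t) ^ (-β) * (1 + t * (m * q)) ^ c)
        - c * ((1 - t) ^ (-β) * (1 + t * (m * q)) ^ (c - 1)))
      (Set.uIcc (0:ℝ) 1) := by
    intro t ht
    rw [Set.uIcc_of_le (zero_le_one)] at ht
    have hApos : 0 < 1 + t * (m * q) := pos_aux hpos ht
    simp only
    rw [rpow_split' hApos c]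
    ring
  have h2 : q * (∫ t in (0:ℝ)..1, (1 - t) ^ (-β) * (t * (m*1) * c * (1 + t * (m * q)) ^ (c - 1)))
      = c * (∫ t in (0:ℝ)..1, (1 - t) ^ (-β) * (1 + t * (m * q)) ^ c)
        - c * (∫ t in (0:ℝ)..1, (1 - t) ^ (-β) * (1 + t * (m * q)) ^ (c - 1)) := by
    rw [← intervalIntegral.integral_const_mul, intervalIntegral.integral_congr h1,
      intervalIntegral.integral_sub ((int_aux hβ1 hpos c).const_mul c)
        ((int_aux hβ1 hpos (c-1)).const_mul c),
      intervalIntegral.integral_const_mul, intervalIntegral.integral_const_mul]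
  have heq : (∫ t in (0:ℝ)..1, (1 - t) ^ (-β) * (t * (m*1) * c * (1 + t * (m * q)) ^ (c - 1)))
      = q⁻¹ * (c * ((∫ t in (0:ℝ)..1, (1 - t) ^ (-β) * (1 + t * (m * q)) ^ c)
        - ∫ t in (0:ℝ)..1, (1 - t) ^ (-β) * (1 + t * (m * q)) ^ (c - 1))) := by
    rw [inv_mul_eq_div, eq_div_iff hq.ne']
    linear_combination h2
  exact heq ▸ hD

/-- The integral (analytically continued) representation of the
LFRRA utility has marginal utility `K·(1+ασq)^(β−1/σ)·q^(−β)` at any `q > 0`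
with `1 + ασq > 0`. -/
theorem lfrra_utility_integral_hasDerivAt
    (α σ β K C q : ℝ) (hσ0 : σ ≠ 0) (hσ1 : σ ≠ 1) (hβ : β ∈ Set.Ioo (0:ℝ) 1)
    (hK : 0 < K) (hq : 0 < q) (hpos : 0 < 1 + α * σ * q) :
    HasDerivAt (fun x : ℝ =>
        (K * σ / (σ - 1)) * (1 + α * σ * x) ^ (β - 1/σ) * x ^ (1 - β) *
          (1 + (β - 1/σ) *
            ∫ t in (0:ℝ)..1, (1 - t) ^ (-β) * (1 + t * (α * σ * x)) ^ (1/σ - 1)) + C)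
      (K * (1 + α * σ * q) ^ (β - 1/σ) * q ^ (-β)) q := by
  obtain ⟨hβ0, hβ1⟩ := hβ
  have hd3 := param_deriv (m := α * σ) hβ0 hβ1 hq hpos (1/σ - 1)
  set I : ℝ := ∫ t in (0:ℝ)..1, (1 - t) ^ (-β) * (1 + t * (α * σ * q)) ^ (1/σ - 1) with hI
  set I₂ : ℝ := ∫ t in (0:ℝ)..1, (1 - t) ^ (-β) * (1 + t * (α * σ * q)) ^ (1/σ - 1 - 1) with hI₂
  have hid := ftc_identity hβ0 hβ1 hpos (1/σ - 1)
  have hinner : HasDerivAt (fun x : ℝ => 1 + α * σ * x) (α * σ) q := by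
    simpa using ((hasDerivAt_id q).const_mul (α * σ)).const_add 1
  have h1 : HasDerivAt (fun x : ℝ => (1 + α * σ * x) ^ (β - 1/σ))
      ((α * σ) * (β - 1/σ) * (1 + α * σ * q) ^ (β - 1/σ - 1)) q :=
    hinner.rpow_const (Or.inl hpos.ne')
  have h2 : HasDerivAt (fun x : ℝ => x ^ (1 - β)) ((1 - β) * q ^ (1 - β - 1)) q :=
    Real.hasDerivAt_rpow_const (Or.inl hq.ne')
  have h3' : HasDerivAt (fun x : ℝ => 1 + (β - 1/σ) *
        ∫ t in (0:ℝ)..1, (1 - t) ^ (-β) * (1 + t * (α * σ * x)) ^ (1/σ - 1))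
      ((β - 1/σ) * (q⁻¹ * ((1/σ - 1) * (I - I₂)))) q :=
    (hd3.const_mul (β - 1/σ)).const_add 1
  have whole := (((h1.const_mul (K * σ / (σ - 1))).mul h2).mul h3').add_const C
  refine whole.congr_deriv ?_
  symm
  simp only [Pi.mul_apply]
  -- now a real-number identity
  have hc : (1/σ - 1) ≠ 0 := by
    intro h
    apply hσ1
    have : 1/σ = 1 := by linarith
    field_simp at this
    linarith
  have hI2val : I₂ = ((1 - β + (1/σ - 1)) * I - 1) / ((1/σ - 1) * (1 + α * σ * q)) := by
    rw [eq_div_iff (mul_ne_zero hc hpos.ne')]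
    linear_combination -hid
  have hsq : q ^ (1 - β) = q * q ^ (-β) := rpow_split hq.le hβ0 hβ1
  have hsq2 : q ^ (1 - β - 1) = q ^ (-β) := by rw [show (1:ℝ) - β - 1 = -β by ring]
  have hsA : (1 + α * σ * q) ^ (β - 1/σ) =
      (1 + α * σ * q) * (1 + α * σ * q) ^ (β - 1/σ - 1) := rpow_split' hpos _
  rw [hI2val, hsq, hsq2, hsA, hI]
  have hσ1' : σ - 1 ≠ 0 := sub_ne_zero.mpr hσ1
  generalize (1 + α * σ * q) ^ (β - 1/σ - 1) = X
  generalize q ^ (-β) = Y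
  generalize (∫ t in (0:ℝ)..1, (1 - t) ^ (-β) * (1 + t * (α * σ * q)) ^ (1/σ - 1)) = J
  have h1σ : (1:ℝ) - σ ≠ 0 := fun h => hσ1 (by linarith)
  field_simp [mul_ne_zero hc hpos.ne', hpos.ne']
  ring
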